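/- Let D ∈ P_{n,r} and π ∈ S_n. The weak composition rdes(L_π, ρ_D) ∈ Z^Z is tail-strong: if its entry at position i is positive for some i ≤ 0, then its entry at position j is positive for all i ≤ j ≤ 0. -/
import Mathlib


open Finset MvPolynomial
open scoped Classical

/-- A partial Dyck path in `P_{n,r}`: a lattice path from `(0,r)` to `(n+r,n+r)` with unit
north and east steps staying weakly above `y = x`, encoded by the x-coordinate `x q` of its
north step at height `q` (for `r+1 ≤ q ≤ n+r`). -/
structure PartialDyckPath (n r : ℕ) where
  x : ℕ → ℕ
  mono : ∀ ⦃q q' : ℕ⦄, r + 1 ≤ q → q ≤ q' → q' ≤ n + r → x q ≤ x q'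
  upper : ∀ ⦃q : ℕ⦄, r + 1 ≤ q → q ≤ n + r → x q ≤ q - 1

/-- `{i,j} ∈ E_D` iff `1 ≤ i < j ≤ n` and the square `s(i+r, j+r)` lies below `D`. -/
def PartialDyckPath.Edge {n r : ℕ} (D : PartialDyckPath n r) (i j : ℕ) : Prop :=
  1 ≤ i ∧ i < j ∧ j ≤ n ∧ D.x (j + r) ≤ i + r - 1

/-- `ρ_D(i)`: the largest `j ≤ r` such that the square `s(j, i+r)` lies above `D`. -/
def PartialDyckPath.rho {n r : ℕ} (D : PartialDyckPath n r) (i : ℕ) : ℕ :=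
  min (D.x (i + r)) r

noncomputable def rhoBarAux (ρπ : ℕ → ℤ) (asc : ℕ → Prop) (n : ℕ) : ℕ → ℤ
  | 0 => ρπ n
  | j + 1 =>
    if asc (n - (j + 1)) then min (rhoBarAux ρπ asc n j) (ρπ (n - (j + 1)))
    else min (rhoBarAux ρπ asc n j - 1) (ρπ (n - (j + 1)))

/-- The tightened restriction `ρ̄` in chain coordinates: `rhoBar ρπ asc n i = ρ̄(π(i))`,
where `ρπ i = ρ(π(i))` and `asc i` is the ascent condition at chain position `i`.
It satisfies `ρ̄(π(n)) = ρ(π(n))`, `ρ̄(π(i)) = min (ρ̄(π(i+1))) (ρ(π(i)))` at ascents and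
`ρ̄(π(i)) = min (ρ̄(π(i+1)) - 1) (ρ(π(i)))` at descents. -/
noncomputable def rhoBar (ρπ : ℕ → ℤ) (asc : ℕ → Prop) (n i : ℕ) : ℤ :=
  rhoBarAux ρπ asc n (n - i)

/-- The last chain position of the maximal ascending run starting at position `s`. -/
noncomputable def runEnd (asc : ℕ → Prop) (n s : ℕ) : ℕ :=
  Nat.find (p := fun e => s ≤ e ∧ (n ≤ e ∨ ¬ asc e))
    ⟨max s n, le_max_left _ _, Or.inl (le_max_right _ _)⟩

/-- The reduced weak descent composition: for each run start `s` (i.e. `s = 1` or a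
descent at `s - 1`), place the length of the run starting at `s` in position `ρ̄(π(s))`. -/
noncomputable def rdes (ρπ : ℕ → ℤ) (asc : ℕ → Prop) (n : ℕ) : ℤ →₀ ℕ :=
  ∑ s ∈ (Finset.Icc 1 n).filter (fun s => s = 1 ∨ ¬ asc (s - 1)),
    Finsupp.single (rhoBar ρπ asc n s) (runEnd asc n s - s + 1)

/-- View a permutation of `Fin n` as a permutation of the vertex set `{1,…,n} ⊆ ℕ`. -/
noncomputable def permNat (n : ℕ) (π : Equiv.Perm (Fin n)) : ℕ → ℕ :=
  fun i => if h : 1 ≤ i ∧ i ≤ n then ((π ⟨i - 1, by omega⟩ : Fin n) : ℕ) + 1 else i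

/-- The `P_D`-ascent condition at chain position `k`: `π(k) ≻_{P_D} π(k+1)`, i.e.
`π(k+1) < π(k)` and `{π(k+1), π(k)} ∉ E_D`. -/
noncomputable def ascP {n r : ℕ} (D : PartialDyckPath n r) (π : Equiv.Perm (Fin n)) :
    ℕ → Prop :=
  fun k => permNat n π (k + 1) < permNat n π k ∧
    ¬ D.Edge (permNat n π (k + 1)) (permNat n π k)

/-- `ρ_D` in chain coordinates: `rhoPi D π k = ρ_D(π(k))`. -/
noncomputable def rhoPi {n r : ℕ} (D : PartialDyckPath n r) (π : Equiv.Perm (Fin n)) :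
    ℕ → ℤ :=
  fun k => (D.rho (permNat n π k) : ℤ)

/-- `inv_G(π)`: the number of edges `{π(a), π(b)}` of `G_D` with `a < b` and `π(a) > π(b)`. -/
noncomputable def invG {n r : ℕ} (D : PartialDyckPath n r) (π : Equiv.Perm (Fin n)) : ℕ :=
  (((Finset.Icc 1 n) ×ˢ (Finset.Icc 1 n)).filter fun p : ℕ × ℕ =>
    p.1 < p.2 ∧ permNat n π p.2 < permNat n π p.1 ∧
      D.Edge (permNat n π p.2) (permNat n π p.1)).card

lemma rhoBar_of_ge (ρπ : ℕ → ℤ) (asc : ℕ → Prop) (n k : ℕ) (h : n ≤ k) :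
    rhoBar ρπ asc n k = ρπ n := by
  unfold rhoBar
  have : n - k = 0 := by omega
  rw [this]
  rfl

lemma rhoBar_rec (ρπ : ℕ → ℤ) (asc : ℕ → Prop) (n k : ℕ) (h : k < n) :
    rhoBar ρπ asc n k =
      if asc k then min (rhoBar ρπ asc n (k + 1)) (ρπ k)
      else min (rhoBar ρπ asc n (k + 1) - 1) (ρπ k) := by
  unfold rhoBar
  have h1 : n - k = (n - (k + 1)) + 1 := by omega
  have h2 : n - ((n - (k + 1)) + 1) = k := by omega
  rw [h1, rhoBarAux, h2]

lemma runEnd_spec (asc : ℕ → Prop) (n s : ℕ) :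
    s ≤ runEnd asc n s ∧ (n ≤ runEnd asc n s ∨ ¬ asc (runEnd asc n s)) := by
  unfold runEnd
  exact Nat.find_spec (p := fun e => s ≤ e ∧ (n ≤ e ∨ ¬ asc e))
    ⟨max s n, le_max_left _ _, Or.inl (le_max_right _ _)⟩

lemma runEnd_min (asc : ℕ → Prop) (n s k : ℕ) (hk : k < runEnd asc n s) :
    ¬ (s ≤ k ∧ (n ≤ k ∨ ¬ asc k)) := by
  unfold runEnd at hk
  exact Nat.find_min _ hk

/-- Key structural lemma: inside a run, a negative `ρ̄` value propagates forward and
equals `ρ̄` at the next run start minus one. -/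
lemma neg_rhoBar (ρπ : ℕ → ℤ) (asc : ℕ → Prop) (n : ℕ) (hρ : ∀ k, 0 ≤ ρπ k) (s : ℕ) :
    ∀ m k, runEnd asc n s - k = m → s ≤ k → k ≤ runEnd asc n s →
      rhoBar ρπ asc n k < 0 →
      runEnd asc n s < n ∧
        rhoBar ρπ asc n k = rhoBar ρπ asc n (runEnd asc n s + 1) - 1 := by
  intro m
  induction m with
  | zero =>
    intro k hm hsk hke hneg
    have hke' : k = runEnd asc n s := by omega
    rw [← hke']
    have hspec := (runEnd_spec asc n s).2
    rw [← hke'] at hspec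
    have hen : k < n := by
      by_contra hcon
      rw [rhoBar_of_ge ρπ asc n k (by omega)] at hneg
      exact absurd hneg (not_lt.mpr (hρ n))
    have hnasc : ¬ asc k := by
      rcases hspec with h1 | h1
      · omega
      · exact h1
    rw [rhoBar_rec ρπ asc n k hen, if_neg hnasc] at hneg ⊢
    refine ⟨hen, ?_⟩
    rcases le_total (rhoBar ρπ asc n (k + 1) - 1) (ρπ k) with hc | hc
    · rw [min_eq_left hc]
    · rw [min_eq_right hc] at hneg ⊢
      have := hρ k
      omega
  | succ m ih =>
    intro k hm hsk hke hneg
    have hk : k < runEnd asc n s := by omega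
    have hmin := runEnd_min asc n s k hk
    push_neg at hmin
    obtain ⟨hkn, hascs⟩ := hmin hsk
    have hkn' : k < n := by omega
    rw [rhoBar_rec ρπ asc n k hkn', if_pos hascs] at hneg
    have heq : min (rhoBar ρπ asc n (k + 1)) (ρπ k) = rhoBar ρπ asc n (k + 1) := by
      rcases le_total (rhoBar ρπ asc n (k + 1)) (ρπ k) with hc | hc
      · exact min_eq_left hc
      · rw [min_eq_right hc] at hneg ⊢
        have := hρ k
        omega
    rw [heq] at hneg
    have hres := ih (k + 1) (by omega) (by omega) (by omega) hneg
    refine ⟨hres.1, ?_⟩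
    rw [rhoBar_rec ρπ asc n k hkn', if_pos hascs, heq]
    exact hres.2

/-- If some run start has negative `ρ̄`-value `i`, then some run start has value `i + 1`. -/
lemma rdes_step (ρπ : ℕ → ℤ) (asc : ℕ → Prop) (n : ℕ) (hρ : ∀ k, 0 ≤ ρπ k) (i : ℤ)
    (hi : i < 0)
    (h : ∃ s ∈ (Finset.Icc 1 n).filter (fun s => s = 1 ∨ ¬ asc (s - 1)),
      rhoBar ρπ asc n s = i) :
    ∃ s ∈ (Finset.Icc 1 n).filter (fun s => s = 1 ∨ ¬ asc (s - 1)),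
      rhoBar ρπ asc n s = i + 1 := by
  obtain ⟨s, hsF, hsi⟩ := h
  rw [Finset.mem_filter, Finset.mem_Icc] at hsF
  have hneg : rhoBar ρπ asc n s < 0 := by omega
  obtain ⟨hen, heq⟩ := neg_rhoBar ρπ asc n hρ s (runEnd asc n s - s) s rfl le_rfl
    (runEnd_spec asc n s).1 hneg
  have hnasc : ¬ asc (runEnd asc n s) := by
    rcases (runEnd_spec asc n s).2 with h1 | h1
    · omega
    · exact h1
  refine ⟨runEnd asc n s + 1, ?_, by omega⟩
  rw [Finset.mem_filter, Finset.mem_Icc]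
  exact ⟨⟨by omega, by omega⟩, Or.inr (by simpa using hnasc)⟩

/-- The weak composition `rdes(L_π, ρ_D)` is tail-strong: a positive
entry at a nonpositive position forces all entries between it and position `0` to be
positive. -/
theorem rdes_tail_strong {n r : ℕ} (D : PartialDyckPath n r) (π : Equiv.Perm (Fin n))
    (i : ℤ) (hi : i ≤ 0) (h : 0 < rdes (rhoPi D π) (ascP D π) n i)
    (j : ℤ) (hij : i ≤ j) (hj : j ≤ 0) :
    0 < rdes (rhoPi D π) (ascP D π) n j := by
  set ρπ := rhoPi D π with hρπ
  set asc := ascP D π with hasc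
  have hρ : ∀ k, 0 ≤ ρπ k := fun k => Int.natCast_nonneg _
  set F := (Finset.Icc 1 n).filter (fun s => s = 1 ∨ ¬ asc (s - 1)) with hF
  -- extract a run start realizing position i
  have hex : ∃ s ∈ F, rhoBar ρπ asc n s = i := by
    by_contra hc
    push_neg at hc
    have hz : rdes ρπ asc n i = 0 := by
      rw [rdes, Finsupp.finset_sum_apply]
      apply Finset.sum_eq_zero
      intro s hs
      rw [Finsupp.single_apply, if_neg (hc s hs)]
    omega
  -- iterate the step lemma
  have key : ∀ m : ℕ, ∀ i' : ℤ, i' + m ≤ 0 → (∃ s ∈ F, rhoBar ρπ asc n s = i') →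
      ∃ s ∈ F, rhoBar ρπ asc n s = i' + m := by
    intro m
    induction m with
    | zero => intro i' _ h'; simpa using h'
    | succ m ih =>
      intro i' hle h'
      have hi' : i' < 0 := by push_cast at hle ⊢; omega
      have hstep := rdes_step ρπ asc n hρ i' hi' h'
      have := ih (i' + 1) (by push_cast at hle ⊢; omega) hstep
      obtain ⟨s, hs1, hs2⟩ := this
      exact ⟨s, hs1, by rw [hs2]; push_cast; ring⟩
  have hjm : j = i + ((j - i).toNat : ℤ) := by omega
  obtain ⟨s, hsF, hsj⟩ := key (j - i).toNat i (by omega) hex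
  rw [← hjm] at hsj
  -- conclude positivity at j
  rw [rdes, Finsupp.finset_sum_apply]
  have hpos : 0 < (Finsupp.single (rhoBar ρπ asc n s) (runEnd asc n s - s + 1)) j := by
    rw [Finsupp.single_apply, if_pos hsj]
    omega
  exact lt_of_lt_of_le hpos (Finset.single_le_sum
    (f := fun t => (Finsupp.single (rhoBar ρπ asc n t) (runEnd asc n t - t + 1)) j)
    (fun t _ => Nat.zero_le _) hsF)
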